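/- Fix integers n ≥ 1, 1 ≤ h ≤ n, 0 ≤ l ≤ n−1 and reals λ ∈ (0,1], θ ∈ (0,1), and let q^{(n,h)}_0, …, q^{(n,h)}_{n−l−1} ∈ ℝ[j,k] be the coefficients of the quotient polynomial Q_{n,h,l}. Then for every 0 ≤ i ≤ n−l−1: (a) q^{(n,h)}_i has degree at most i in the variable j and degree at most i in the variable k; (b) for every 0 ≤ s ≤ i, the coefficient of j^s in q^{(n,h)}_i (a polynomial in k) has degree at most i−s, and the coefficient of k^s in q^{(n,h)}_i (a polynomial in j) has degree at most i−s. -/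

import Mathlib

open Polynomial

/-- Rising factorial in a commutative ring: `(a)_m = a (a+1) ⋯ (a+m−1)`, with `(a)_0 = 1`. -/
noncomputable def rfp {S : Type*} [CommRing S] (a : S) (m : ℕ) : S :=
  ∏ i ∈ Finset.range m, (a + (i : S))

/-- The base ring `R = ℝ[j,k]`. -/
abbrev R2 : Type := MvPolynomial (Fin 2) ℝ

/-- The variable `j` as a constant of `R[d]`. -/
noncomputable def Jv : Polynomial R2 := Polynomial.C (MvPolynomial.X 0)

/-- The variable `k` as a constant of `R[d]`. -/
noncomputable def Kv : Polynomial R2 := Polynomial.C (MvPolynomial.X 1)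

/-- Embedding of real scalars into `R[d]`. -/
noncomputable def cst (x : ℝ) : Polynomial R2 := Polynomial.C (MvPolynomial.C x)

/-- The dividend `P_{n,h}` in the polynomial long division (an element of `ℝ[j,k][d]`). -/
noncomputable def Pnh (n h : ℕ) (lam th : ℝ) : Polynomial R2 :=
  (X - 2 * Jv - 1) * (X + 2 * (h : Polynomial R2) - 2 * Jv - 1) * rfp (X - Jv) h *
    rfp (cst (1 - th) * X - Jv) h *
    rfp (cst (lam * th) * X + (h : Polynomial R2) - (n : Polynomial R2) - Jv + Kv) n *
    rfp (cst th * X + (h : Polynomial R2) - (n : Polynomial R2) - Jv + Kv) n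

/-- The divisor `D_{n,h,l}` in the polynomial long division (an element of `ℝ[j,k][d]`). -/
noncomputable def Dnhl (n h l : ℕ) (lam th : ℝ) : Polynomial R2 :=
  cst (lam * th) * X ^ (l + 1) * (X + (h : Polynomial R2) - 2 * Jv - 1) *
    rfp (cst th * X - Jv) h *
    rfp (X - (n : Polynomial R2) + (h : Polynomial R2) - 2 * Jv - 1 + Kv) (n + h + 1)

/-- The joint-degree predicate: every nonzero `d^e`-coefficient of `F` has
total degree (in `j,k`) at most `m - e`. -/
def Wd (F : Polynomial R2) (m : ℕ) : Prop :=
  ∀ e, F.coeff e ≠ 0 → (F.coeff e).totalDegree + e ≤ m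

lemma Wd_coeff_eq_zero {F m} (hF : Wd F m) {e : ℕ} (he : m < e) : F.coeff e = 0 := by
  by_contra h
  have := hF e h
  omega

lemma Wd_natDegree_le {F m} (hF : Wd F m) : F.natDegree ≤ m :=
  Polynomial.natDegree_le_iff_coeff_eq_zero.mpr fun _ hN => Wd_coeff_eq_zero hF hN

lemma Wd_mono {F m m'} (hF : Wd F m) (h : m ≤ m') : Wd F m' :=
  fun e he => le_trans (hF e he) h

lemma Wd_add {F G m} (hF : Wd F m) (hG : Wd G m) : Wd (F + G) m := by
  intro e he
  rw [Polynomial.coeff_add] at he ⊢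
  rcases eq_or_ne (F.coeff e) 0 with h0 | h0
  · rw [h0, zero_add] at he ⊢; exact hG e he
  rcases eq_or_ne (G.coeff e) 0 with h1 | h1
  · rw [h1, add_zero] at he ⊢; exact hF e he
  have := hF e h0; have := hG e h1
  have h2 := MvPolynomial.totalDegree_add (F.coeff e) (G.coeff e)
  omega

lemma Wd_neg {F m} (hF : Wd F m) : Wd (-F) m := by
  intro e he
  rw [Polynomial.coeff_neg] at he ⊢
  rw [MvPolynomial.totalDegree_neg]
  exact hF e (by simpa using he)

lemma Wd_sub {F G m} (hF : Wd F m) (hG : Wd G m) : Wd (F - G) m := by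
  rw [sub_eq_add_neg]; exact Wd_add hF (Wd_neg hG)

lemma Wd_C {p : R2} {m : ℕ} (hp : p.totalDegree ≤ m) : Wd (Polynomial.C p) m := by
  intro e he
  rw [Polynomial.coeff_C] at he ⊢
  split at he
  · next h => subst h; simpa using hp
  · simp at he

lemma Wd_X : Wd (X : Polynomial R2) 1 := by
  intro e he
  rw [Polynomial.coeff_X] at he ⊢
  split at he
  · next h => subst h; simp
  · simp at he

lemma Wd_natCast (t : ℕ) : Wd ((t : ℕ) : Polynomial R2) 0 := by
  rw [← Polynomial.C_eq_natCast]
  exact Wd_C (by rw [← map_natCast (MvPolynomial.C (σ := Fin 2) (R := ℝ)) t,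
    MvPolynomial.totalDegree_C])

lemma Wd_one : Wd (1 : Polynomial R2) 0 := by
  simpa using Wd_natCast 1

lemma Wd_mul {F G m m'} (hF : Wd F m) (hG : Wd G m') : Wd (F * G) (m + m') := by
  intro e he
  rw [Polynomial.coeff_mul] at he ⊢
  by_cases hle : e ≤ m + m'
  · have hterm : ∀ x ∈ Finset.HasAntidiagonal.antidiagonal e,
        (F.coeff x.1 * G.coeff x.2).totalDegree ≤ m + m' - e := by
      intro x hx
      rw [Finset.HasAntidiagonal.mem_antidiagonal] at hx
      rcases eq_or_ne (F.coeff x.1) 0 with h0 | h0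
      · simp [h0]
      rcases eq_or_ne (G.coeff x.2) 0 with h1 | h1
      · simp [h1]
      have := hF _ h0; have := hG _ h1
      have := MvPolynomial.totalDegree_mul (F.coeff x.1) (G.coeff x.2)
      omega
    have := MvPolynomial.totalDegree_finsetSum_le hterm
    omega
  · exfalso
    apply he
    refine Finset.sum_eq_zero fun x hx => ?_
    rw [Finset.HasAntidiagonal.mem_antidiagonal] at hx
    rcases le_or_gt x.1 m with h0 | h0
    · rw [Wd_coeff_eq_zero hG (show m' < x.2 by omega), mul_zero]
    · rw [Wd_coeff_eq_zero hF h0, zero_mul]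

lemma Wd_rfp {a : Polynomial R2} (ha : Wd a 1) (m : ℕ) : Wd (rfp a m) m := by
  induction m with
  | zero => simpa [rfp] using Wd_one
  | succ t ih =>
      rw [rfp, Finset.prod_range_succ, ← rfp]
      have : Wd (a + (t : Polynomial R2)) 1 := Wd_add ha (Wd_mono (Wd_natCast t) (by omega))
      simpa using Wd_mul ih this

lemma Wd_pow {F m} (hF : Wd F m) (t : ℕ) : Wd (F ^ t) (t * m) := by
  induction t with
  | zero => simpa using Wd_one
  | succ t ih =>
      rw [pow_succ]
      have := Wd_mul ih hF
      simpa [Nat.succ_mul] using this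

lemma rfp_coeff {a : Polynomial R2} (ha : Wd a 1) (m : ℕ) :
    (rfp a m).coeff m = (a.coeff 1) ^ m := by
  induction m with
  | zero => simp [rfp]
  | succ t ih =>
      rw [rfp, Finset.prod_range_succ, ← rfp]
      have h1 : Wd (a + (t : Polynomial R2)) 1 :=
        Wd_add ha (Wd_mono (Wd_natCast t) (by omega))
      rw [Polynomial.coeff_mul_add_eq_of_natDegree_le (Wd_natDegree_le (Wd_rfp ha t))
        (Wd_natDegree_le h1), ih]
      rw [Polynomial.coeff_add, Polynomial.coeff_natCast_ite]
      simp [pow_succ]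

lemma Wd_Jv : Wd Jv 1 := Wd_C (by rw [MvPolynomial.totalDegree_X])
lemma Wd_Kv : Wd Kv 1 := Wd_C (by rw [MvPolynomial.totalDegree_X])
lemma Wd_cst (r : ℝ) : Wd (cst r) 0 := Wd_C (by rw [MvPolynomial.totalDegree_C])

lemma two_eq_C : (2 : Polynomial R2) = Polynomial.C (2 : R2) := by
  rw [map_ofNat]

lemma Wd_two : Wd (2 : Polynomial R2) 0 := by
  rw [two_eq_C]
  exact Wd_C (by rw [show (2 : R2) = MvPolynomial.C 2 from (map_ofNat _ 2).symm,
    MvPolynomial.totalDegree_C])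

lemma Wd_Pnh (n h : ℕ) (lam th : ℝ) : Wd (Pnh n h lam th) (2 * n + 2 * h + 2) := by
  have w1 : Wd (X - 2 * Jv - 1) 1 :=
    Wd_sub (Wd_sub Wd_X (by simpa using Wd_mul Wd_two Wd_Jv)) (Wd_mono Wd_one (by omega))
  have w2 : Wd (X + 2 * (h : Polynomial R2) - 2 * Jv - 1) 1 :=
    Wd_sub (Wd_sub (Wd_add Wd_X (Wd_mono (by simpa using Wd_mul Wd_two (Wd_natCast h)) (by omega)))
      (by simpa using Wd_mul Wd_two Wd_Jv)) (Wd_mono Wd_one (by omega))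
  have w3 : Wd (X - Jv) 1 := Wd_sub Wd_X Wd_Jv
  have w4 : Wd (cst (1 - th) * X - Jv) 1 :=
    Wd_sub (by simpa using Wd_mul (Wd_cst (1 - th)) Wd_X) Wd_Jv
  have w5 : Wd (cst (lam * th) * X + (h : Polynomial R2) - (n : Polynomial R2) - Jv + Kv) 1 :=
    Wd_add (Wd_sub (Wd_sub (Wd_add (by simpa using Wd_mul (Wd_cst (lam * th)) Wd_X)
      (Wd_mono (Wd_natCast h) (by omega))) (Wd_mono (Wd_natCast n) (by omega))) Wd_Jv) Wd_Kv
  have w6 : Wd (cst th * X + (h : Polynomial R2) - (n : Polynomial R2) - Jv + Kv) 1 :=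
    Wd_add (Wd_sub (Wd_sub (Wd_add (by simpa using Wd_mul (Wd_cst th) Wd_X)
      (Wd_mono (Wd_natCast h) (by omega))) (Wd_mono (Wd_natCast n) (by omega))) Wd_Jv) Wd_Kv
  have := Wd_mul (Wd_mul (Wd_mul (Wd_mul (Wd_mul w1 w2) (Wd_rfp w3 h)) (Wd_rfp w4 h))
    (Wd_rfp w5 n)) (Wd_rfp w6 n)
  rw [Pnh]
  exact Wd_mono this (by omega)

lemma WdA (n h : ℕ) : Wd (X + (h : Polynomial R2) - 2 * Jv - 1 : Polynomial R2) 1 :=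
  Wd_sub (Wd_sub (Wd_add Wd_X (Wd_mono (Wd_natCast h) (by omega)))
    (by simpa using Wd_mul Wd_two Wd_Jv)) (Wd_mono Wd_one (by omega))

lemma WdB (h : ℕ) (th : ℝ) : Wd (rfp (cst th * X - Jv) h) h :=
  Wd_rfp (Wd_sub (by simpa using Wd_mul (Wd_cst th) Wd_X) Wd_Jv) h

lemma WdCc (n h : ℕ) :
    Wd (rfp (X - (n : Polynomial R2) + (h : Polynomial R2) - 2 * Jv - 1 + Kv) (n + h + 1))
      (n + h + 1) :=
  Wd_rfp (Wd_add (Wd_sub (Wd_sub (Wd_add (Wd_sub Wd_X (Wd_mono (Wd_natCast n) (by omega)))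
    (Wd_mono (Wd_natCast h) (by omega))) (by simpa using Wd_mul Wd_two Wd_Jv))
    (Wd_mono Wd_one (by omega))) Wd_Kv) (n + h + 1)

lemma Wd_Dnhl (n h l : ℕ) (lam th : ℝ) : Wd (Dnhl n h l lam th) (n + 2 * h + l + 3) := by
  have := Wd_mul (Wd_mul (Wd_mul (Wd_mul (Wd_cst (lam * th))
    (by simpa using Wd_pow Wd_X (l + 1))) (WdA n h)) (WdB h th)) (WdCc n h)
  rw [Dnhl]
  exact Wd_mono this (by omega)

lemma coeff_cst_Xpow (r : ℝ) (p : ℕ) : (cst r * X ^ p : Polynomial R2).coeff p = MvPolynomial.C r := by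
  rw [show cst r = Polynomial.C (MvPolynomial.C r) from rfl, Polynomial.coeff_C_mul,
    Polynomial.coeff_X_pow]
  simp

lemma coeffA (h : ℕ) : (X + (h : Polynomial R2) - 2 * Jv - 1 : Polynomial R2).coeff 1 = 1 := by
  have h2 : (2 : Polynomial R2) * Jv = Polynomial.C (2 * MvPolynomial.X 0) := by
    rw [map_mul, map_ofNat]; rfl
  rw [Polynomial.coeff_sub, Polynomial.coeff_sub, Polynomial.coeff_add, h2,
    Polynomial.coeff_C, Polynomial.coeff_one, Polynomial.coeff_natCast_ite, Polynomial.coeff_X_one]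
  simp

lemma coeffB (h : ℕ) (th : ℝ) : (rfp (cst th * X - Jv) h).coeff h = MvPolynomial.C (th ^ h) := by
  rw [rfp_coeff (Wd_sub (by simpa using Wd_mul (Wd_cst th) Wd_X) Wd_Jv) h]
  have : (cst th * X - Jv).coeff 1 = MvPolynomial.C th := by
    rw [Polynomial.coeff_sub, show cst th = Polynomial.C (MvPolynomial.C th) from rfl,
      Polynomial.coeff_C_mul, Polynomial.coeff_X_one,
      show Jv = Polynomial.C (MvPolynomial.X 0) from rfl, Polynomial.coeff_C]
    simp
  rw [this, ← map_pow]

lemma coeffCc (n h : ℕ) :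
    (rfp (X - (n : Polynomial R2) + (h : Polynomial R2) - 2 * Jv - 1 + Kv) (n + h + 1)).coeff
      (n + h + 1) = 1 := by
  have harg : Wd (X - (n : Polynomial R2) + (h : Polynomial R2) - 2 * Jv - 1 + Kv) 1 :=
    Wd_add (Wd_sub (Wd_sub (Wd_add (Wd_sub Wd_X (Wd_mono (Wd_natCast n) (by omega)))
      (Wd_mono (Wd_natCast h) (by omega))) (by simpa using Wd_mul Wd_two Wd_Jv))
      (Wd_mono Wd_one (by omega))) Wd_Kv
  rw [rfp_coeff harg]
  have h2 : (2 : Polynomial R2) * Jv = Polynomial.C (2 * MvPolynomial.X 0) := by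
    rw [map_mul, map_ofNat]; rfl
  have : (X - (n : Polynomial R2) + (h : Polynomial R2) - 2 * Jv - 1 + Kv).coeff 1 = 1 := by
    rw [Polynomial.coeff_add, Polynomial.coeff_sub, Polynomial.coeff_sub, Polynomial.coeff_add,
      Polynomial.coeff_sub, h2, Polynomial.coeff_C, Polynomial.coeff_one,
      Polynomial.coeff_natCast_ite, Polynomial.coeff_natCast_ite, Polynomial.coeff_X_one,
      show Kv = Polynomial.C (MvPolynomial.X 1) from rfl, Polynomial.coeff_C]
    simp
  rw [this, one_pow]

lemma coeffD (n h l : ℕ) (lam th : ℝ) :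
    (Dnhl n h l lam th).coeff (n + 2 * h + l + 3) = MvPolynomial.C (lam * th * th ^ h) := by
  have n1 : (cst (lam * th) * X ^ (l + 1) : Polynomial R2).natDegree ≤ l + 1 :=
    Wd_natDegree_le (by simpa using Wd_mul (Wd_cst (lam * th)) (Wd_pow Wd_X (l + 1)))
  have n2 : (cst (lam * th) * X ^ (l + 1) * (X + (h : Polynomial R2) - 2 * Jv - 1)).natDegree
      ≤ l + 1 + 1 :=
    Wd_natDegree_le (Wd_mul (by simpa using Wd_mul (Wd_cst (lam * th)) (Wd_pow Wd_X (l + 1)))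
      (WdA n h))
  have w0 : Wd (cst (lam * th) * X ^ (l + 1) : Polynomial R2) (l + 1) := by
    simpa using Wd_mul (Wd_cst (lam * th)) (Wd_pow Wd_X (l + 1))
  have n3 : (cst (lam * th) * X ^ (l + 1) * (X + (h : Polynomial R2) - 2 * Jv - 1) *
      rfp (cst th * X - Jv) h).natDegree ≤ l + 1 + 1 + h :=
    Wd_natDegree_le (Wd_mul (Wd_mul w0 (WdA n h)) (WdB h th))
  rw [Dnhl, show n + 2 * h + l + 3 = l + 1 + 1 + h + (n + h + 1) from by omega,
    Polynomial.coeff_mul_add_eq_of_natDegree_le n3 (Wd_natDegree_le (WdCc n h)),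
    Polynomial.coeff_mul_add_eq_of_natDegree_le n2 (Wd_natDegree_le (WdB h th)),
    Polynomial.coeff_mul_add_eq_of_natDegree_le n1 (Wd_natDegree_le (WdA n h)),
    coeff_cst_Xpow, coeffA, coeffB, coeffCc]
  rw [mul_one, mul_one, ← map_mul]

/-- Degree bounds for the coefficients `q^{(n,h)}_i` of the quotient `Q_{n,h,l}`:
each `q_i` has degree at most `i` in each of `j` and `k`; moreover the coefficient of `j^s`
in `q_i` has degree at most `i−s` in `k`, and the coefficient of `k^s` has degree at most
`i−s` in `j`. -/
theorem stmt_6 (n h l : ℕ) (hn : 1 ≤ n) (hh1 : 1 ≤ h) (hhn : h ≤ n) (hl : l ≤ n - 1)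
    (lam th : ℝ) (hlam0 : 0 < lam) (hlam1 : lam ≤ 1) (hth0 : 0 < th) (hth1 : th < 1)
    (Q Rem : Polynomial R2)
    (hdiv : Pnh n h lam th = Dnhl n h l lam th * Q + Rem)
    (hRem : Rem.degree < ((n + 2 * h + l + 3 : ℕ) : WithBot ℕ)) :
    ∀ i ≤ n - l - 1,
      (MvPolynomial.degreeOf 0 (Q.coeff (n - l - 1 - i)) ≤ i ∧
        MvPolynomial.degreeOf 1 (Q.coeff (n - l - 1 - i)) ≤ i) ∧
      (∀ s b : ℕ, s ≤ i → i - s < b →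
        MvPolynomial.coeff (Finsupp.single 0 s + Finsupp.single 1 b)
          (Q.coeff (n - l - 1 - i)) = 0) ∧
      (∀ s b : ℕ, s ≤ i → i - s < b →
        MvPolynomial.coeff (Finsupp.single 0 b + Finsupp.single 1 s)
          (Q.coeff (n - l - 1 - i)) = 0) := by
  intro i hi
  set N := n + 2 * h + l + 3 with hNdef
  set M := n - l - 1 with hMdef
  have hNM : N + M = 2 * n + 2 * h + 2 := by omega
  have hc : (lam * th * th ^ h) ≠ 0 := by positivity
  set c : ℝ := lam * th * th ^ h with hcdef
  set D := Dnhl n h l lam th with hDdef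
  set P := Pnh n h lam th with hPdef
  have WP : Wd P (2 * n + 2 * h + 2) := Wd_Pnh n h lam th
  have WD : Wd D N := Wd_Dnhl n h l lam th
  have hDN : D.coeff N = MvPolynomial.C c := coeffD n h l lam th
  set D' : Polynomial R2 := D - Polynomial.C (MvPolynomial.C c) * X ^ N with hD'
  have hD'c : ∀ a, D'.coeff a ≠ 0 → a < N ∧ (D'.coeff a).totalDegree + a ≤ N := by
    intro a ha
    have hxa : (Polynomial.C (MvPolynomial.C c) * X ^ N : Polynomial R2).coeff a
        = if a = N then MvPolynomial.C c else 0 := by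
      rw [Polynomial.coeff_C_mul, Polynomial.coeff_X_pow]
      split <;> simp
    rcases lt_trichotomy a N with h1 | h1 | h1
    · have heq : D'.coeff a = D.coeff a := by
        rw [hD', Polynomial.coeff_sub, hxa, if_neg (by omega), sub_zero]
      rw [heq] at ha ⊢
      exact ⟨h1, WD a ha⟩
    · exfalso; apply ha
      rw [hD', Polynomial.coeff_sub, hxa, if_pos h1, h1, hDN, sub_self]
    · exfalso; apply ha
      rw [hD', Polynomial.coeff_sub, hxa, if_neg (by omega),
        Wd_coeff_eq_zero WD h1, sub_zero]
  have key : ∀ e, MvPolynomial.C c * Q.coeff e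
      = P.coeff (N + e) - (D' * Q).coeff (N + e) := by
    intro e
    have hsplit : P = Polynomial.C (MvPolynomial.C c) * X ^ N * Q + D' * Q + Rem := by
      rw [hdiv, hD']; ring
    have hRem0 : Rem.coeff (N + e) = 0 := by
      apply Polynomial.coeff_eq_zero_of_degree_lt
      refine lt_of_lt_of_le hRem ?_
      have hle : (n + 2 * h + l + 3 : ℕ) ≤ N + e := by omega
      exact_mod_cast hle
    have hXQ : (Polynomial.C (MvPolynomial.C c) * X ^ N * Q).coeff (N + e)
        = MvPolynomial.C c * Q.coeff e := by
      rw [show Polynomial.C (MvPolynomial.C c) * X ^ N * Q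
          = Polynomial.C (MvPolynomial.C c) * (Q * X ^ N) from by ring,
        Polynomial.coeff_C_mul, show N + e = e + N from by omega,
        Polynomial.coeff_mul_X_pow]
    rw [hsplit, Polynomial.coeff_add, Polynomial.coeff_add, hRem0, add_zero, hXQ]
    ring
  have main : ∀ t e, Q.natDegree < e + t → Q.coeff e ≠ 0 →
      (Q.coeff e).totalDegree + e ≤ M := by
    intro t
    induction t with
    | zero =>
        intro e hlt hne
        exact absurd (Polynomial.coeff_eq_zero_of_natDegree_lt (by omega)) hne
    | succ t ih =>
        intro e hlt hne
        by_cases hcase : Q.natDegree < e + t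
        · exact ih e hcase hne
        have hb : ∀ b, e < b → Q.coeff b ≠ 0 → (Q.coeff b).totalDegree + b ≤ M := by
          intro b hb1 hnb; exact ih b (by omega) hnb
        have hb0 : ∀ b, e < b → M < b → Q.coeff b = 0 := by
          intro b h1 h2; by_contra h3; have := hb b h1 h3; omega
        have hkey := key e
        by_cases heM : e ≤ M
        · have t2 : ((D' * Q).coeff (N + e)).totalDegree ≤ M - e := by
            rw [Polynomial.coeff_mul]
            refine MvPolynomial.totalDegree_finsetSum_le ?_
            intro x hx
            rw [Finset.HasAntidiagonal.mem_antidiagonal] at hx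
            rcases eq_or_ne (D'.coeff x.1) 0 with h0 | h0
            · simp [h0]
            rcases eq_or_ne (Q.coeff x.2) 0 with h1 | h1
            · simp [h1]
            obtain ⟨hx1, hx2⟩ := hD'c x.1 h0
            have h3 := hb x.2 (by omega) h1
            have h4 := MvPolynomial.totalDegree_mul (D'.coeff x.1) (Q.coeff x.2)
            omega
          have t1 : (P.coeff (N + e)).totalDegree ≤ M - e := by
            rcases eq_or_ne (P.coeff (N + e)) 0 with h0 | h0
            · simp [h0]
            have := WP (N + e) h0; omega
          have t3 : (MvPolynomial.C c * Q.coeff e).totalDegree ≤ M - e := by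
            rw [hkey]
            exact le_trans (MvPolynomial.totalDegree_sub _ _) (max_le t1 t2)
          have t4 : (Q.coeff e).totalDegree ≤ M - e := by
            have hq : Q.coeff e = MvPolynomial.C c⁻¹ * (MvPolynomial.C c * Q.coeff e) := by
              rw [← mul_assoc, ← map_mul, inv_mul_cancel₀ hc, MvPolynomial.C_1, one_mul]
            rw [hq]
            refine le_trans (MvPolynomial.totalDegree_mul _ _) ?_
            rw [MvPolynomial.totalDegree_C]; omega
          omega
        · exfalso
          apply hne
          have hP0 : P.coeff (N + e) = 0 := Wd_coeff_eq_zero WP (by omega)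
          have hDQ0 : (D' * Q).coeff (N + e) = 0 := by
            rw [Polynomial.coeff_mul]
            refine Finset.sum_eq_zero fun x hx => ?_
            rw [Finset.HasAntidiagonal.mem_antidiagonal] at hx
            rcases eq_or_ne (D'.coeff x.1) 0 with h0 | h0
            · rw [h0, zero_mul]
            obtain ⟨hx1, _⟩ := hD'c x.1 h0
            rw [hb0 x.2 (by omega) (by omega), mul_zero]
          have hz : MvPolynomial.C c * Q.coeff e = 0 := by
            rw [hkey, hP0, hDQ0, sub_zero]
          rcases mul_eq_zero.mp hz with h0 | h0
          · exact absurd h0 (MvPolynomial.C_ne_zero.mpr hc)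
          · exact h0
  have H := main (Q.natDegree + 1) (M - i) (by omega)
  have hsum : ∀ dd : Fin 2 →₀ ℕ, (∑ x ∈ dd.support, dd x) = dd 0 + dd 1 := by
    intro dd
    rw [Finset.sum_subset (Finset.subset_univ dd.support)
      (fun x _ hx => Finsupp.notMem_support_iff.mp hx)]
    exact Fin.sum_univ_two dd
  rcases eq_or_ne (Q.coeff (M - i)) 0 with h0 | h0
  · refine ⟨⟨?_, ?_⟩, ?_, ?_⟩ <;> simp [h0]
  have htot : (Q.coeff (M - i)).totalDegree ≤ i := by have := H h0; omega
  refine ⟨⟨le_trans (MvPolynomial.degreeOf_le_totalDegree _ _) htot,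
      le_trans (MvPolynomial.degreeOf_le_totalDegree _ _) htot⟩, ?_, ?_⟩
  · intro s b hs hbb
    apply MvPolynomial.coeff_eq_zero_of_totalDegree_lt
    rw [hsum _]
    simp only [Finsupp.add_apply, Finsupp.single_apply]
    norm_num
    omega
  · intro s b hs hbb
    apply MvPolynomial.coeff_eq_zero_of_totalDegree_lt
    rw [hsum _]
    simp only [Finsupp.add_apply, Finsupp.single_apply]
    norm_num
    omega
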